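/- Let M ∈ ℝ^{n×n} be skew-symmetric, q ∈ ℝⁿ, and define F(z) = z ⊙ (Mz + q) (Hadamard product). Then the Jacobian of F at z equals Z M + S, where Z = diag(z) and S = diag(Mz + q), and this Jacobian is nonsingular whenever z > 0 and Mz + q > 0 (componentwise). -/

import Mathlib

open Matrix

theorem jacobian_of_complementarity_map {n : ℕ} (M : Matrix (Fin n) (Fin n) ℝ)
    (hM : Mᵀ = -M) (q z : Fin n → ℝ)
    (hz : ∀ i, 0 < z i) (hs : ∀ i, 0 < (M *ᵥ z + q) i) :
    HasFDerivAt (fun w : Fin n → ℝ => w * (M *ᵥ w + q))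
      ((Matrix.diagonal z * M + Matrix.diagonal (M *ᵥ z + q)).mulVecLin.toContinuousLinearMap) z
    ∧ IsUnit (Matrix.diagonal z * M + Matrix.diagonal (M *ᵥ z + q)) := by
  constructor
  · rw [hasFDerivAt_pi']
    intro i
    have h1 : HasFDerivAt (fun w : Fin n → ℝ => w i)
        (ContinuousLinearMap.proj i : (Fin n → ℝ) →L[ℝ] ℝ) z :=
      hasFDerivAt_apply i z
    have h2 : HasFDerivAt (fun w : Fin n → ℝ => (M *ᵥ w + q) i)
        ((ContinuousLinearMap.proj i).comp M.mulVecLin.toContinuousLinearMap) z := by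
      have : HasFDerivAt (fun w : Fin n → ℝ => (M *ᵥ w) i)
          ((ContinuousLinearMap.proj i).comp M.mulVecLin.toContinuousLinearMap) z :=
        ((ContinuousLinearMap.proj i).comp M.mulVecLin.toContinuousLinearMap).hasFDerivAt
      simpa [Pi.add_apply] using this.add_const (q i)
    have := h1.mul h2
    refine this.congr_fderiv ?_
    ext w
    simp [Matrix.mulVecLin_apply, Matrix.add_mulVec, ← Matrix.mulVec_mulVec,
      Matrix.mulVec_diagonal, Pi.add_apply]
  · rw [← Matrix.mulVec_injective_iff_isUnit]
    set A := Matrix.diagonal z * M + Matrix.diagonal (M *ᵥ z + q) with hA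
    have key : ∀ x : Fin n → ℝ, A *ᵥ x = 0 → x = 0 := by
      intro x hx
      -- componentwise: z i * (M x) i + s i * x i = 0
      have hcomp : ∀ i, z i * (M *ᵥ x) i + (M *ᵥ z + q) i * x i = 0 := by
        intro i
        have := congrFun hx i
        simpa [hA, Matrix.add_mulVec, ← Matrix.mulVec_mulVec, Matrix.mulVec_diagonal,
          Pi.add_apply] using this
      -- xᵀ M x = 0
      have hskew : x ⬝ᵥ (M *ᵥ x) = 0 := by
        have h1 : x ⬝ᵥ (M *ᵥ x) = -(x ⬝ᵥ (M *ᵥ x)) := by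
          conv_lhs => rw [Matrix.dotProduct_mulVec, ← Matrix.mulVec_transpose, hM]
          rw [Matrix.neg_mulVec, neg_dotProduct, dotProduct_comm]
        linarith
      -- sum of x i * (M x) i = - sum (s/z) x i^2
      have hsum : ∑ i, x i * (M *ᵥ x) i = 0 := hskew
      have heach : ∀ i, x i * (M *ᵥ x) i = -(((M *ᵥ z + q) i / z i) * (x i)^2) := by
        intro i
        have hzi := (hz i).ne'
        have h := hcomp i
        simp only [Pi.add_apply] at h ⊢
        field_simp
        linear_combination x i * h
      have : ∑ i, ((M *ᵥ z + q) i / z i) * (x i)^2 = 0 := by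
        have h2 : ∑ i, -(((M *ᵥ z + q) i / z i) * (x i)^2) = 0 := by
          rw [← hsum]; exact Finset.sum_congr rfl (fun i _ => (heach i).symm)
        simpa using h2
      have hzero : ∀ i ∈ Finset.univ, ((M *ᵥ z + q) i / z i) * (x i)^2 = 0 := by
        apply (Finset.sum_eq_zero_iff_of_nonneg _).mp this
        intro i _
        exact mul_nonneg (div_pos (hs i) (hz i)).le (sq_nonneg _)
      funext i
      have := hzero i (Finset.mem_univ i)
      have hpos : 0 < (M *ᵥ z + q) i / z i := div_pos (hs i) (hz i)
      have : (x i)^2 = 0 := by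
        rcases mul_eq_zero.mp this with h | h
        · exact absurd h hpos.ne'
        · exact h
      simpa using pow_eq_zero_iff (n := 2) (by norm_num) |>.mp this
    intro a b hab
    have : A *ᵥ (a - b) = 0 := by
      rw [Matrix.mulVec_sub, hab, sub_self]
    have := key _ this
    exact sub_eq_zero.mp this
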